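/- Define 𝓕 = {x ∈ [0,1] : ∀ n ≥ 1, |B sin(π 3^{n−1} x)| ≤ 1} with B = 2/√3. Then 𝓕 equals the middle-thirds Cantor set. -/

import Mathlib

open Real

/-- The middle-thirds Cantor set: points admitting a ternary expansion with
digits in `{0,2}`. -/
noncomputable def cantorMiddleThirds : Set ℝ :=
  {x : ℝ | ∃ d : ℕ → Fin 3, (∀ n, d n ≠ 1) ∧ x = ∑' n : ℕ, (d n : ℝ) / 3 ^ (n + 1)}

lemma abs_sin_pi_int_add (N : ℤ) (t : ℝ) :
    |Real.sin (π * ((N : ℝ) + t))| = |Real.sin (π * t)| := by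
  have h : π * ((N : ℝ) + t) = π * t + N * π := by ring
  rw [h, Real.sin_add_int_mul_pi, abs_mul]
  have : |(-1:ℝ) ^ N| = 1 := by
    rcases Int.even_or_odd N with he | he
    · rw [he.neg_one_zpow]; norm_num
    · rw [Odd.neg_one_zpow he]; norm_num
  rw [this, one_mul]

lemma abs_sin_le_aux {t : ℝ} (h0 : 0 ≤ t) (h1 : t ≤ 1/3) :
    |Real.sin (π * t)| ≤ √3 / 2 := by
  have hπ := Real.pi_pos
  have hmem : π * t ∈ Set.Icc (-(π/2)) (π/2) := by
    constructor <;> nlinarith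
  have hmem' : π / 3 ∈ Set.Icc (-(π/2)) (π/2) := by
    constructor <;> nlinarith
  have hle : Real.sin (π * t) ≤ Real.sin (π/3) :=
    Real.strictMonoOn_sin.monotoneOn hmem hmem' (by nlinarith)
  have hnn : 0 ≤ Real.sin (π * t) :=
    Real.sin_nonneg_of_nonneg_of_le_pi (by nlinarith) (by nlinarith)
  rw [abs_of_nonneg hnn, ← Real.sin_pi_div_three]
  exact hle

lemma abs_sin_le {t : ℝ} (h : (0 ≤ t ∧ t ≤ 1/3) ∨ (2/3 ≤ t ∧ t ≤ 1)) :
    |Real.sin (π * t)| ≤ √3 / 2 := by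
  rcases h with ⟨h0, h1⟩ | ⟨h0, h1⟩
  · exact abs_sin_le_aux h0 h1
  · have h : π * t = π - π * (1 - t) := by ring
    rw [h, Real.sin_pi_sub]
    exact abs_sin_le_aux (by linarith) (by linarith)

lemma sin_gt_aux {t : ℝ} (h1 : 1/3 < t) (h2 : t ≤ 1/2) : √3 / 2 < Real.sin (π * t) := by
  have hπ := Real.pi_pos
  rw [← Real.sin_pi_div_three]
  exact Real.strictMonoOn_sin (by constructor <;> nlinarith)
    (by constructor <;> nlinarith) (by nlinarith)

lemma sin_gt {t : ℝ} (h1 : 1/3 < t) (h2 : t < 2/3) : √3 / 2 < Real.sin (π * t) := by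
  rcases le_or_gt t (1/2) with h | h
  · exact sin_gt_aux h1 h
  · have heq : π * t = π - π * (1 - t) := by ring
    rw [heq, Real.sin_pi_sub]
    exact sin_gt_aux (by linarith) (by linarith)

lemma B_iff (s : ℝ) : |(2 / Real.sqrt 3) * s| ≤ 1 ↔ |s| ≤ √3 / 2 := by
  have h3 : (0:ℝ) < √3 := Real.sqrt_pos.mpr (by norm_num)
  have h3' : √3 * √3 = 3 := Real.mul_self_sqrt (by norm_num)
  rw [abs_mul, abs_of_pos (by positivity), div_mul_eq_mul_div, div_le_one h3]
  constructor <;> intro h <;> nlinarith [abs_nonneg s]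

lemma fin3_le (d : Fin 3) : (d : ℝ) ≤ 2 := by
  have := d.is_lt; exact_mod_cast Nat.le_of_lt_succ this

lemma fin3_nonneg (d : Fin 3) : (0:ℝ) ≤ (d : ℝ) := by positivity

lemma dig_summable (d : ℕ → Fin 3) : Summable (fun k => (d k : ℝ) / 3 ^ (k + 1)) := by
  apply Summable.of_nonneg_of_le (fun k => by positivity) (fun k => ?_)
    (summable_geometric_of_lt_one (r := 1/3) (by norm_num) (by norm_num))
  calc (d k : ℝ) / 3 ^ (k + 1) ≤ 2 / 3 ^ (k + 1) :=
        div_le_div_of_nonneg_right (fin3_le (d k)) (by positivity) |>.trans_eq rfl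
    _ ≤ (1/3) ^ k := by rw [pow_succ, one_div_pow]; rw [div_le_div_iff₀] <;> [nlinarith [pow_pos (show (0:ℝ)<3 by norm_num) k]; positivity; positivity]

lemma dig_tsum_nonneg (d : ℕ → Fin 3) : 0 ≤ ∑' k, (d k : ℝ) / 3 ^ (k + 1) :=
  tsum_nonneg fun k => by positivity

lemma dig_tsum_le_one (d : ℕ → Fin 3) : ∑' k, (d k : ℝ) / 3 ^ (k + 1) ≤ 1 := by
  have h := Summable.tsum_le_tsum (f := fun k => (d k : ℝ) / 3 ^ (k + 1))
    (g := fun k => (2/3) * (1/3) ^ k) (fun k => ?_) (dig_summable d)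
    ((summable_geometric_of_lt_one (r := 1/3) (by norm_num) (by norm_num)).mul_left _)
  · rw [tsum_mul_left, tsum_geometric_of_lt_one (by norm_num) (by norm_num)] at h
    norm_num at h
    linarith
  · calc (d k : ℝ) / 3 ^ (k + 1) ≤ 2 / 3 ^ (k + 1) :=
          div_le_div_of_nonneg_right (fin3_le (d k)) (by positivity)
      _ = (2/3) * (1/3) ^ k := by rw [pow_succ, one_div_pow]; field_simp

noncomputable def yseq (x : ℝ) : ℕ → ℝ
  | 0 => x
  | n+1 => if yseq x n ≤ 1/3 then 3 * yseq x n else 3 * yseq x n - 2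

noncomputable def dig (x : ℝ) (n : ℕ) : Fin 3 := if yseq x n ≤ 1/3 then 0 else 2

lemma dig_ne_one (x : ℝ) (n : ℕ) : dig x n ≠ 1 := by unfold dig; split <;> decide

lemma yseq_succ (x : ℝ) (n : ℕ) : yseq x (n+1) = 3 * yseq x n - (dig x n : ℝ) := by
  rw [yseq, dig]; split <;> simp

lemma yseq_partial (x : ℝ) :
    ∀ n, x = (∑ k ∈ Finset.range n, (dig x k : ℝ) / 3 ^ (k + 1)) + yseq x n / 3 ^ n := by
  intro n; induction n with
  | zero => simp [yseq]
  | succ n ih =>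
    conv_lhs => rw [ih]
    rw [Finset.sum_range_succ, yseq_succ, pow_succ]
    have h3 : (3:ℝ) ^ n ≠ 0 := by positivity
    field_simp
    ring

lemma partial_int (d : ℕ → Fin 3) (n : ℕ) :
    ∃ N : ℤ, (N : ℝ) = 3 ^ n * ∑ k ∈ Finset.range n, (d k : ℝ) / 3 ^ (k + 1) := by
  refine ⟨∑ k ∈ Finset.range n, ((d k).val : ℤ) * 3 ^ (n - 1 - k), ?_⟩
  push_cast
  rw [Finset.mul_sum]
  apply Finset.sum_congr rfl
  intro k hk
  have hk' : k < n := Finset.mem_range.mp hk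
  have hpow : (3:ℝ) ^ (n - 1 - k) * 3 ^ (k + 1) = 3 ^ n := by
    rw [← pow_add]; congr 1; omega
  have h0 : (3:ℝ) ^ (k + 1) ≠ 0 := by positivity
  field_simp
  linear_combination ((d k).val : ℝ) * hpow

lemma yseq_disj {x : ℝ} (hs : ∀ m : ℕ, |Real.sin (π * 3 ^ m * x)| ≤ √3 / 2)
    {n : ℕ} (hm : yseq x n ∈ Set.Icc (0:ℝ) 1) :
    yseq x n ≤ 1/3 ∨ 2/3 ≤ yseq x n := by
  by_contra hcon
  push_neg at hcon
  obtain ⟨h1, h2⟩ := hcon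
  obtain ⟨N, hN⟩ := partial_int (dig x) n
  have hx3 : (3:ℝ) ^ n * x = (N : ℝ) + yseq x n := by
    conv_lhs => rw [yseq_partial x n]
    rw [mul_add, ← hN]
    congr 1
    field_simp
  have hb := hs n
  rw [show π * 3 ^ n * x = π * ((N : ℝ) + yseq x n) by rw [mul_assoc, hx3]] at hb
  rw [abs_sin_pi_int_add] at hb
  have := sin_gt h1 h2
  linarith [le_abs_self (Real.sin (π * yseq x n))]

lemma yseq_mem {x : ℝ} (hx : x ∈ Set.Icc (0:ℝ) 1)
    (hs : ∀ m : ℕ, |Real.sin (π * 3 ^ m * x)| ≤ √3 / 2) :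
    ∀ n, yseq x n ∈ Set.Icc (0:ℝ) 1 := by
  intro n; induction n with
  | zero => exact hx
  | succ n ih =>
    have hd := yseq_disj hs ih
    simp only [Set.mem_Icc] at ih ⊢
    obtain ⟨h0, h1⟩ := ih
    rw [yseq]
    rcases hd with h | h
    · rw [if_pos h]; constructor <;> linarith
    · rw [if_neg (by linarith)]; constructor <;> linarith

lemma forward {x : ℝ} (hx : x ∈ Set.Icc (0:ℝ) 1)
    (hs : ∀ m : ℕ, |Real.sin (π * 3 ^ m * x)| ≤ √3 / 2) :
    x = ∑' n, (dig x n : ℝ) / 3 ^ (n + 1) := by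
  have hsum := dig_summable (dig x)
  have h1 := hsum.hasSum.tendsto_sum_nat
  have h0 : Filter.Tendsto (fun n => yseq x n / 3 ^ n) Filter.atTop (nhds 0) := by
    apply squeeze_zero (fun n => div_nonneg (yseq_mem hx hs n).1 (by positivity))
      (g := fun n => (1/3 : ℝ) ^ n) (fun n => ?_)
      (tendsto_pow_atTop_nhds_zero_of_lt_one (by norm_num) (by norm_num))
    show yseq x n / 3 ^ n ≤ (1/3 : ℝ) ^ n
    rw [one_div_pow]
    exact div_le_div_of_nonneg_right (yseq_mem hx hs n).2 (by positivity)
  have h2 : Filter.Tendsto (fun n => ∑ k ∈ Finset.range n, (dig x k : ℝ) / 3 ^ (k + 1))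
      Filter.atTop (nhds x) := by
    have := (tendsto_const_nhds (x := x) (f := Filter.atTop (α := ℕ))).sub h0
    rw [sub_zero] at this
    exact this.congr fun n => by have := yseq_partial x n; linarith
  exact tendsto_nhds_unique h2 h1

lemma reverse (d : ℕ → Fin 3) (hd : ∀ n, d n ≠ 1) (m : ℕ) :
    |Real.sin (π * 3 ^ m * (∑' n, (d n : ℝ) / 3 ^ (n + 1)))| ≤ √3 / 2 := by
  set x := ∑' n, (d n : ℝ) / 3 ^ (n + 1) with hxdef
  have hsum := dig_summable d
  have hsplit := Summable.sum_add_tsum_nat_add m hsum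
  set t := ∑' k, (d (k + m) : ℝ) / 3 ^ (k + 1) with htdef
  have htail : ∑' k, (d (k + m) : ℝ) / 3 ^ ((k + m) + 1) = t * ((3:ℝ) ^ m)⁻¹ := by
    rw [htdef, ← tsum_mul_right]
    congr 1; funext k
    rw [show (k + m) + 1 = (k + 1) + m from by omega, pow_add, ← div_div, div_eq_mul_inv]
  obtain ⟨N, hN⟩ := partial_int d m
  have hx3 : (3:ℝ) ^ m * x = (N : ℝ) + t := by
    have hx : x = (∑ k ∈ Finset.range m, (d k : ℝ) / 3 ^ (k + 1)) + t * ((3:ℝ) ^ m)⁻¹ := by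
      rw [hxdef, ← hsplit, htail]
    rw [hx, mul_add, ← hN]
    congr 1
    field_simp
  -- bounds on t
  have ht0 : 0 ≤ t := dig_tsum_nonneg (fun k => d (k + m))
  have ht1 : t ≤ 1 := dig_tsum_le_one (fun k => d (k + m))
  have hsplit1 := Summable.sum_add_tsum_nat_add 1 (dig_summable (fun k => d (k + m)))
  have htt : t = (d m : ℝ) / 3 + ∑' k, (d ((k + 1) + m) : ℝ) / 3 ^ (k + 2) := by
    rw [htdef, ← hsplit1]
    norm_num
  have htail2 : ∑' k, (d ((k + 1) + m) : ℝ) / 3 ^ (k + 2) =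
      (∑' k, (d ((k + 1) + m) : ℝ) / 3 ^ (k + 1)) * (3:ℝ)⁻¹ := by
    rw [← tsum_mul_right]
    congr 1; funext k
    rw [show k + 2 = (k + 1) + 1 from rfl, pow_succ, ← div_div, div_eq_mul_inv]
  have htail0 : 0 ≤ ∑' k, (d ((k + 1) + m) : ℝ) / 3 ^ (k + 1) :=
    dig_tsum_nonneg (fun k => d ((k + 1) + m))
  have htail1 : (∑' k, (d ((k + 1) + m) : ℝ) / 3 ^ (k + 1)) ≤ 1 :=
    dig_tsum_le_one (fun k => d ((k + 1) + m))
  have hdm : (d m).val = 0 ∨ (d m).val = 2 := by have := (d m).is_lt; have := hd m; omega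
  have hdm' : ((d m : ℝ) = 0 ∧ t ≤ 1/3) ∨ ((d m : ℝ) = 2 ∧ 2/3 ≤ t) := by
    rcases hdm with h | h
    · left
      have hv : (d m : ℝ) = 0 := by exact_mod_cast congrArg (Nat.cast (R := ℝ)) h
      refine ⟨hv, ?_⟩
      rw [htt, hv, htail2]
      nlinarith
    · right
      have hv : (d m : ℝ) = 2 := by exact_mod_cast congrArg (Nat.cast (R := ℝ)) h
      refine ⟨hv, ?_⟩
      rw [htt, hv, htail2]
      nlinarith
  rw [show π * 3 ^ m * x = π * ((N : ℝ) + t) by rw [mul_assoc, hx3], abs_sin_pi_int_add]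
  apply abs_sin_le
  rcases hdm' with ⟨_, h⟩ | ⟨_, h⟩
  · exact Or.inl ⟨ht0, h⟩
  · exact Or.inr ⟨h, ht1⟩

/-- The set of points of `[0,1]` satisfying `|B sin(π 3^(n-1) x)| ≤ 1` for all
`n ≥ 1`, with `B = 2/√3`, equals the middle-thirds Cantor set. -/
theorem stmt_13 :
    {x : ℝ | x ∈ Set.Icc (0 : ℝ) 1 ∧
        ∀ n : ℕ, 1 ≤ n → |(2 / Real.sqrt 3) * Real.sin (π * 3 ^ (n - 1) * x)| ≤ 1}
      = cantorMiddleThirds := by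
  ext x
  simp only [Set.mem_setOf_eq, cantorMiddleThirds]
  constructor
  · rintro ⟨hx, h⟩
    have hs : ∀ m : ℕ, |Real.sin (π * 3 ^ m * x)| ≤ √3 / 2 := by
      intro m
      have hm := h (m + 1) (by omega)
      simp only [Nat.add_sub_cancel] at hm
      exact (B_iff _).mp hm
    exact ⟨dig x, fun n => dig_ne_one x n, forward hx hs⟩
  · rintro ⟨d, hd, rfl⟩
    refine ⟨Set.mem_Icc.mpr ⟨dig_tsum_nonneg d, dig_tsum_le_one d⟩, ?_⟩
    intro n _
    exact (B_iff _).mpr (reverse d hd (n - 1))
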